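/- Let f̃ : ℤ → ℤ be an order-preserving map with f̃(a + n) = f̃(a) + m for all a (where n, m ≥ 1), representing a morphism f : [n] → [m] in the cyclic category. Define f_♯ : ℤ → ℤ by f_♯(a) = max { b ∈ ℤ | f̃(b) ≤ a }. Then f_♯ is well-defined (the set is nonempty and bounded above), order-preserving, and satisfies f_♯(a + m) = f_♯(a) + n for all a ∈ ℤ. -/

import Mathlib

/-- The duality `f ↦ f_♯` of the cyclic category: for an order-preserving
`f : ℤ → ℤ` with `f (a + n) = f a + m`, the map `a ↦ max {b | f b ≤ a}` is
well defined (the set is nonempty and bounded above), order-preserving, and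
satisfies `f_♯ (a + m) = f_♯ a + n`. -/
theorem stmt_1 (n m : ℤ) (hn : 1 ≤ n) (hm : 1 ≤ m)
    (f : ℤ → ℤ) (hmono : Monotone f) (hper : ∀ a : ℤ, f (a + n) = f a + m) :
    (∀ a : ℤ, {b : ℤ | f b ≤ a}.Nonempty ∧ BddAbove {b : ℤ | f b ≤ a}) ∧
    Monotone (fun a : ℤ => sSup {b : ℤ | f b ≤ a}) ∧
    (∀ a : ℤ, sSup {b : ℤ | f b ≤ a + m} = sSup {b : ℤ | f b ≤ a} + n) := by
  have hperk : ∀ (k : ℤ) (a : ℤ), f (a + k * n) = f a + k * m := by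
    intro k
    induction k using Int.induction_on with
    | zero => simp
    | succ k ih =>
      intro a
      have := hper (a + k * n)
      push_cast
      rw [show a + (k + 1) * n = a + k * n + n by ring, this, ih a]
      push_cast; ring
    | pred k ih =>
      intro a
      have h1 : a + (-(k:ℤ) - 1) * n + n = a + (-(k:ℤ)) * n := by ring
      have h2 : f (a + (-(k:ℤ)) * n) = f (a + (-(k:ℤ) - 1) * n) + m := by
        rw [← h1, hper]
      have h3 := ih a
      push_cast at h3 ⊢
      linarith
  have hne : ∀ a : ℤ, {b : ℤ | f b ≤ a}.Nonempty := by
    intro a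
    set k := max (f 0 - a) 0 with hk
    refine ⟨-k * n, ?_⟩
    have h1 : f (-k * n) = f 0 + (-k) * m := by
      have := hperk (-k) 0; simpa using this
    have hk0 : 0 ≤ k := le_max_right _ _
    have hk1 : f 0 - a ≤ k := le_max_left _ _
    have : k ≤ k * m := le_mul_of_one_le_right hk0 hm
    simp only [Set.mem_setOf_eq, h1]
    nlinarith
  have hbdd : ∀ a : ℤ, BddAbove {b : ℤ | f b ≤ a} := by
    intro a
    set k := max (a - f 0 + 1) 1 with hk
    refine ⟨k * n, fun b hb => ?_⟩
    by_contra h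
    push_neg at h
    have hk1 : a - f 0 + 1 ≤ k := le_max_left _ _
    have hk0 : (1:ℤ) ≤ k := le_max_right _ _
    have h1 : f (k * n) = f 0 + k * m := by
      have := hperk k 0; simpa using this
    have : f (k * n) ≤ f b := hmono h.le
    have : k ≤ k * m := le_mul_of_one_le_right (by linarith) hm
    simp only [Set.mem_setOf_eq] at hb
    nlinarith
  refine ⟨fun a => ⟨hne a, hbdd a⟩, ?_, ?_⟩
  · intro a a' haa'
    exact csSup_le_csSup (hbdd a') (hne a) (fun b hb => le_trans hb haa')
  · intro a
    have hset : ∀ b : ℤ, f b ≤ a + m ↔ f (b - n) ≤ a := by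
      intro b
      have : f (b - n + n) = f (b - n) + m := hper (b - n)
      rw [sub_add_cancel] at this
      rw [this]
      exact ⟨fun h => by linarith, fun h => by linarith⟩
    have hmem : sSup {b : ℤ | f b ≤ a} ∈ {b : ℤ | f b ≤ a} :=
      Int.csSup_mem (hne a) (hbdd a)
    apply le_antisymm
    · apply csSup_le (hne (a + m))
      intro b hb
      have : b - n ∈ {b : ℤ | f b ≤ a} := (hset b).mp hb
      have := le_csSup (hbdd a) this
      linarith
    · apply le_csSup (hbdd (a + m))
      show f (sSup {b : ℤ | f b ≤ a} + n) ≤ a + m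
      rw [hper]
      exact add_le_add_left hmem m
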